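/- Let n_s ≥ 2, let Δs_0, …, Δs_{n_s-1} > 0, K_∥ > 0, γ ≥ 0, Δt > 0, and let n ∈ ℕ. Suppose the numbers (T_i^n)_i and (T_i^{n+1})_i are all nonnegative and satisfy one step of the implicit finite volume scheme: (T_i^{n+1} − T_i^n)/Δt = (F_{i+1/2}^{n+1} − F_{i−1/2}^{n+1})/Δs_i for 0 ≤ i ≤ n_s−1, where F_{i+1/2}^{n+1} = (4K_∥/7)·((T_{i+1}^{n+1})^{7/2} − (T_i^{n+1})^{7/2})/(Δs_{i+1} + Δs_i) for 0 ≤ i ≤ n_s−2, F_{−1/2}^{n+1} = γ T_0^{n+1}, F_{n_s−1/2}^{n+1} = −γ T_{n_s−1}^{n+1}. Then for every convex continuously differentiable function φ : ℝ → ℝ, Σ_{i=0}^{n_s−1} Δs_i φ(T_i^{n+1}) − Σ_{i=0}^{n_s−1} Δs_i φ(T_i^n) ≤ −γΔt[φ'(T_0^{n+1}) T_0^{n+1} + φ'(T_{n_s−1}^{n+1}) T_{n_s−1}^{n+1}] − (4K_∥/7)·Δt·Σ_{i=0}^{n_s−2} [φ'(T_{i+1}^{n+1}) − φ'(T_i^{n+1})]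 · ((T_{i+1}^{n+1})^{7/2} − (T_i^{n+1})^{7/2})/(Δs_i + Δs_{i+1}). -/

import Mathlib

/-- Convexity inequality: `φ a - φ b ≤ φ' a * (a - b)`. -/
lemma convex_grad_ineq {φ : ℝ → ℝ} (hφ : ConvexOn ℝ Set.univ φ)
    (hd : Differentiable ℝ φ) (a b : ℝ) :
    φ a - φ b ≤ deriv φ a * (a - b) := by
  rcases lt_trichotomy a b with h | h | h
  · have := hφ.deriv_le_slope (Set.mem_univ a) (Set.mem_univ b) h (hd a)
    rw [slope_def_field, le_div_iff₀ (by linarith)] at this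
    nlinarith
  · simp [h]
  · have := hφ.slope_le_deriv (Set.mem_univ b) (Set.mem_univ a) h (hd a)
    rw [slope_def_field, div_le_iff₀ (by linarith)] at this
    nlinarith

/-- Abel summation. -/
lemma abel_sum (g F : ℕ → ℝ) (n : ℕ) :
    ∑ i ∈ Finset.range (n+1), g i * (F (i+1) - F i)
      = g n * F (n+1) - g 0 * F 0
        - ∑ i ∈ Finset.range n, (g (i+1) - g i) * F (i+1) := by
  induction n with
  | zero => simp; ring
  | succ n ih =>
    rw [Finset.sum_range_succ, ih, Finset.sum_range_succ]
    ring


/-- Key discrete entropy inequality from the proof of Proposition 2.2: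
for one step of the backward Euler finite volume scheme with nonnegative
values, and any convex `C¹` function `φ`, the discrete entropy
`∑ Δsᵢ φ(Tᵢ)` decreases up to the boundary and dissipation terms.
Here `F i` denotes the numerical flux `F_{i-1/2}^{n+1}` computed from the
values `Tn1` at time level `n+1`. -/
theorem implicit_scheme_entropy_inequality
    (ns : ℕ) (hns : 2 ≤ ns)
    (Δs : ℕ → ℝ) (hΔs : ∀ i < ns, 0 < Δs i)
    (K γ Δt : ℝ) (hK : 0 < K) (hγ : 0 ≤ γ) (hΔt : 0 < Δt)
    (Tn Tn1 : ℕ → ℝ) (F : ℕ → ℝ)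
    (hTn : ∀ i < ns, 0 ≤ Tn i) (hTn1 : ∀ i < ns, 0 ≤ Tn1 i)
    (hF0 : F 0 = γ * Tn1 0)
    (hFns : F ns = -γ * Tn1 (ns - 1))
    (hFint : ∀ i, 1 ≤ i → i ≤ ns - 1 →
      F i = (4 * K / 7) *
        ((Tn1 i) ^ ((7:ℝ)/2) - (Tn1 (i-1)) ^ ((7:ℝ)/2)) / (Δs i + Δs (i-1)))
    (hscheme : ∀ i < ns, (Tn1 i - Tn i) / Δt = (F (i+1) - F i) / Δs i) :
    ∀ φ : ℝ → ℝ, ConvexOn ℝ Set.univ φ → ContDiff ℝ 1 φ →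
      (∑ i ∈ Finset.range ns, Δs i * φ (Tn1 i))
        - (∑ i ∈ Finset.range ns, Δs i * φ (Tn i))
      ≤ -(γ * Δt) * (deriv φ (Tn1 0) * Tn1 0
            + deriv φ (Tn1 (ns-1)) * Tn1 (ns-1))
        - (4 * K / 7) * Δt *
          (∑ i ∈ Finset.range (ns-1),
            (deriv φ (Tn1 (i+1)) - deriv φ (Tn1 i)) *
              ((Tn1 (i+1)) ^ ((7:ℝ)/2) - (Tn1 i) ^ ((7:ℝ)/2))
              / (Δs i + Δs (i+1))) := by
  intro φ hconv hC1
  have hd : Differentiable ℝ φ := hC1.differentiable one_ne_zero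
  obtain ⟨m, rfl⟩ : ∃ m, ns = m + 1 := ⟨ns - 1, by omega⟩
  have hm1 : 1 ≤ m := by omega
  simp only [Nat.add_sub_cancel] at hFns ⊢
  have key : ∀ i ∈ Finset.range (m+1),
      Δs i * φ (Tn1 i) - Δs i * φ (Tn i)
        ≤ Δt * (deriv φ (Tn1 i) * (F (i+1) - F i)) := by
    intro i hi
    rw [Finset.mem_range] at hi
    have hΔ := hΔs i hi
    have h2 := hscheme i hi
    rw [div_eq_div_iff hΔt.ne' hΔ.ne'] at h2
    have h1 := convex_grad_ineq hconv hd (Tn1 i) (Tn i)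
    calc Δs i * φ (Tn1 i) - Δs i * φ (Tn i)
        = Δs i * (φ (Tn1 i) - φ (Tn i)) := by ring
      _ ≤ Δs i * (deriv φ (Tn1 i) * (Tn1 i - Tn i)) :=
          mul_le_mul_of_nonneg_left h1 hΔ.le
      _ = deriv φ (Tn1 i) * ((Tn1 i - Tn i) * Δs i) := by ring
      _ = deriv φ (Tn1 i) * ((F (i+1) - F i) * Δt) := by rw [h2]
      _ = Δt * (deriv φ (Tn1 i) * (F (i+1) - F i)) := by ring
  have hsum : (∑ i ∈ Finset.range (m+1), Δs i * φ (Tn1 i))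
      - ∑ i ∈ Finset.range (m+1), Δs i * φ (Tn i)
      ≤ Δt * ∑ i ∈ Finset.range (m+1), deriv φ (Tn1 i) * (F (i+1) - F i) := by
    rw [← Finset.sum_sub_distrib, Finset.mul_sum]
    exact Finset.sum_le_sum key
  refine hsum.trans ?_
  rw [abel_sum (fun i => deriv φ (Tn1 i)) F m]
  have hFsub : ∑ i ∈ Finset.range m,
      (deriv φ (Tn1 (i+1)) - deriv φ (Tn1 i)) * F (i+1)
      = (4*K/7) * ∑ i ∈ Finset.range m,
          (deriv φ (Tn1 (i+1)) - deriv φ (Tn1 i)) *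
            ((Tn1 (i+1)) ^ ((7:ℝ)/2) - (Tn1 i) ^ ((7:ℝ)/2)) / (Δs i + Δs (i+1)) := by
    rw [Finset.mul_sum]
    refine Finset.sum_congr rfl fun i hi => ?_
    rw [Finset.mem_range] at hi
    rw [hFint (i+1) (by omega) (by omega)]
    simp only [Nat.add_sub_cancel]
    rw [add_comm (Δs (i+1)) (Δs i)]
    ring
  rw [hFns, hF0, hFsub]
  ring_nf
  apply le_of_eq
  ring
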